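/- For integers N₋, N₊ ≥ 2, with a* = (1/2)·artanh((N₋-N₊)/(N₊N₋-1)) and x* = √(((N₋-1)(N₊-1))/((N₋+1)(N₊+1))), one has e^{-2|a*|} = √(((N₊-1)(N₋+1))/((N₋-1)(N₊+1))) > x* whenever N₋ ≥ N₊ (so the solution x* lies strictly inside the allowed region). -/

import Mathlib

open Real

/-- Inverse hyperbolic tangent. -/
noncomputable def artanh (y : ℝ) : ℝ := 1 / 2 * Real.log ((1 + y) / (1 - y))

/-- For `N₋ ≥ N₊ ≥ 2`, `e^{-2|a*|} = √(((N₊-1)(N₋+1))/((N₋-1)(N₊+1))) > x*`, so the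
solution `x*` lies strictly inside the allowed region. -/
theorem stmt_13 (Nm Np : ℕ) (hNp : 2 ≤ Np) (hle : Np ≤ Nm)
    (a x : ℝ)
    (ha : a = 1 / 2 * _root_.artanh (((Nm : ℝ) - (Np : ℝ)) / ((Np : ℝ) * (Nm : ℝ) - 1)))
    (hx : x = Real.sqrt ((((Nm : ℝ) - 1) * ((Np : ℝ) - 1)) /
      (((Nm : ℝ) + 1) * ((Np : ℝ) + 1)))) :
    Real.exp (-2 * |a|) =
      Real.sqrt ((((Np : ℝ) - 1) * ((Nm : ℝ) + 1)) / (((Nm : ℝ) - 1) * ((Np : ℝ) + 1))) ∧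
    x < Real.exp (-2 * |a|) := by
  have hP2 : (2:ℝ) ≤ (Np:ℝ) := by exact_mod_cast hNp
  have hPM : (Np:ℝ) ≤ (Nm:ℝ) := by exact_mod_cast hle
  set M := (Nm:ℝ) with hMdef
  set P := (Np:ℝ) with hPdef
  have hM2 : (2:ℝ) ≤ M := le_trans hP2 hPM
  have h1 : 0 < M - 1 := by linarith
  have h2 : 0 < P - 1 := by linarith
  have h3 : 0 < M + 1 := by linarith
  have h4 : 0 < P + 1 := by linarith
  have hden : 0 < P * M - 1 := by nlinarith
  set y := (M - P) / (P * M - 1) with hy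
  have hnum1 : 1 + y = (M - 1) * (P + 1) / (P * M - 1) := by
    rw [hy, eq_div_iff hden.ne', add_mul, div_mul_cancel₀ _ hden.ne']; ring
  have hnum2 : 1 - y = (P - 1) * (M + 1) / (P * M - 1) := by
    rw [hy, eq_div_iff hden.ne', sub_mul, div_mul_cancel₀ _ hden.ne']; ring
  set R := ((M - 1) * (P + 1)) / ((P - 1) * (M + 1)) with hR
  have hRpos : 0 < R := by positivity
  have hRratio : (1 + y) / (1 - y) = R := by
    rw [hnum1, hnum2, hR, div_div_div_cancel_right₀ hden.ne']
  have hR1 : 1 ≤ R := by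
    rw [hR, le_div_iff₀ (by positivity)]
    nlinarith
  have ha' : a = 1/4 * Real.log R := by
    rw [ha, _root_.artanh, hRratio]; ring
  have hapos : 0 ≤ a := by
    have := Real.log_nonneg hR1
    rw [ha']; linarith
  have habs : |a| = a := abs_of_nonneg hapos
  have hexp : Real.exp (-2 * |a|) = Real.sqrt (1 / R) := by
    rw [habs, ha',
      show -2 * (1/4 * Real.log R) = Real.log R * (-(1/2)) by ring,
      ← Real.rpow_def_of_pos hRpos, Real.rpow_neg hRpos.le,
      ← Real.sqrt_eq_rpow, one_div, Real.sqrt_inv]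
  have hinv : 1 / R = ((P - 1) * (M + 1)) / ((M - 1) * (P + 1)) := by
    rw [hR]; field_simp
  constructor
  · rw [hexp, hinv]
  · rw [hexp, hinv, hx]
    apply Real.sqrt_lt_sqrt (by positivity)
    rw [div_lt_div_iff₀ (by positivity) (by positivity)]
    nlinarith
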